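/- Define Q(u0,u1,u2,u3;α,β) := α(u0−u3)(u1−u2) − β(u0−u1)(u3−u2) for complex arguments. Let u0, u1, u2, u3, u12, u23, u31, u123 ∈ ℂ and α1, α2, α3 ∈ ℂ, and assume that on each of the six quadruples (u0,u1,u12,u2), (u0,u2,u23,u3), (u0,u3,u31,u1), (u1,u12,u123,u31), (u2,u23,u123,u12), (u3,u31,u123,u23) the four entries are pairwise distinct. If Q(u0,u1,u12,u2;α1,α2)=0, Q(u0,u2,u23,u3;α2,α3)=0, Q(u0,u3,u31,u1;α3,α1)=0, and Q(u1,u12,u123,u31;α2,α3)=0, then Q(u2,u23,u123,u12;α3,α1)=0 and Q(u3,u31,u123,u23;α1,α2)=0. -/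
import Mathlib

/-- The quad-graph polynomial of equation (Q1) with δ = 0
(the cross-ratio equation). -/
def crossRatioQ (u0 u1 u2 u3 α β : ℂ) : ℂ :=
  α * (u0 - u3) * (u1 - u2) - β * (u0 - u1) * (u3 - u2)

/-- Four complex numbers are pairwise distinct. -/
def PairwiseDistinct4 (a b c d : ℂ) : Prop :=
  a ≠ b ∧ a ≠ c ∧ a ≠ d ∧ b ≠ c ∧ b ≠ d ∧ c ≠ d

private lemma mul3_zero {a b c : ℂ} (h : a * (b * c) = 0) (hb : b ≠ 0) (hc : c ≠ 0) :
    a = 0 := by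
  rcases mul_eq_zero.mp h with h' | h'
  · exact h'
  · exact absurd h' (mul_ne_zero hb hc)

set_option maxHeartbeats 2000000 in
/-- 3D consistency of the cross-ratio equation (Q1 with δ = 0). -/
theorem crossRatio_3D_consistency
    (u0 u1 u2 u3 u12 u23 u31 u123 α1 α2 α3 : ℂ)
    (hd1 : PairwiseDistinct4 u0 u1 u12 u2)
    (hd2 : PairwiseDistinct4 u0 u2 u23 u3)
    (hd3 : PairwiseDistinct4 u0 u3 u31 u1)
    (hd4 : PairwiseDistinct4 u1 u12 u123 u31)
    (hd5 : PairwiseDistinct4 u2 u23 u123 u12)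
    (hd6 : PairwiseDistinct4 u3 u31 u123 u23)
    (h1 : crossRatioQ u0 u1 u12 u2 α1 α2 = 0)
    (h2 : crossRatioQ u0 u2 u23 u3 α2 α3 = 0)
    (h3 : crossRatioQ u0 u3 u31 u1 α3 α1 = 0)
    (h4 : crossRatioQ u1 u12 u123 u31 α2 α3 = 0) :
    crossRatioQ u2 u23 u123 u12 α3 α1 = 0 ∧
    crossRatioQ u3 u31 u123 u23 α1 α2 = 0 := by
  obtain ⟨d1ab, d1ac, d1ad, d1bc, d1bd, d1cd⟩ := hd1
  obtain ⟨d2ab, d2ac, d2ad, d2bc, d2bd, d2cd⟩ := hd2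
  obtain ⟨d3ab, d3ac, d3ad, d3bc, d3bd, d3cd⟩ := hd3
  obtain ⟨d4ab, d4ac, d4ad, d4bc, d4bd, d4cd⟩ := hd4
  obtain ⟨d5ab, d5ac, d5ad, d5bc, d5bd, d5cd⟩ := hd5
  simp only [crossRatioQ] at h1 h2 h3 h4 ⊢
  by_cases ha2 : α2 = 0
  · have ha1 : α1 = 0 := by
      refine mul3_zero (a := α1) ?_ (sub_ne_zero.mpr d1ad) (sub_ne_zero.mpr d1bc)
      linear_combination h1 + (u0 - u1) * (u2 - u12) * ha2
    have ha3 : α3 = 0 := by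
      refine mul3_zero (a := α3) ?_ (sub_ne_zero.mpr d2ab) (sub_ne_zero.mpr d2cd.symm)
      linear_combination -h2 + (u0 - u3) * (u2 - u23) * ha2
    subst ha1 ha2 ha3
    constructor <;> ring
  · have ha1 : α1 ≠ 0 := by
      intro ha1
      apply ha2
      refine mul3_zero (a := α2) ?_ (sub_ne_zero.mpr d1ab) (sub_ne_zero.mpr d1cd.symm)
      linear_combination -h1 + (u0 - u2) * (u1 - u12) * ha1
    have ha3 : α3 ≠ 0 := by
      intro ha3
      apply ha2
      refine mul3_zero (a := α2) ?_ (sub_ne_zero.mpr d2ad) (sub_ne_zero.mpr d2bc)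
      linear_combination h2 + (u0 - u2) * (u3 - u23) * ha3
    have hK2 : α3 * (u0 - u2) - α2 * (u0 - u3) ≠ 0 := by
      intro hK
      apply ha2
      refine mul3_zero (a := α2) ?_ (sub_ne_zero.mpr d2ad) (sub_ne_zero.mpr d2bd)
      linear_combination h2 + (u3 - u23) * hK
    have hK3 : α1 * (u0 - u3) - α3 * (u0 - u1) ≠ 0 := by
      intro hK
      apply ha1
      refine mul3_zero (a := α1) ?_ (sub_ne_zero.mpr d3ab) (sub_ne_zero.mpr d3bd)
      linear_combination h3 + (u3 - u31) * hK
    have hK4 : α3 * (u1 - u12) - α2 * (u1 - u31) ≠ 0 := by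
      intro hK
      apply ha2
      refine mul3_zero (a := α2) ?_ (sub_ne_zero.mpr d4ad) (sub_ne_zero.mpr d4bd)
      linear_combination h4 + (u31 - u123) * hK
    have hR2 : ((-u3 + u0) * (-u12 + u1) * (-u12 + u1) * (-u23*α1^2 + u2*α1^2) + α3 * (((-u0*u2*u3*u23*α2) + u12 * ((u2*u3*u23*α1) + u0 * ((-u2*u23*α1) + u3 * ((u23*α2 - u23*α1) + u2 * (α2 + α1)))) + u12^2 * ((-u3*u23*α1) + u0 * ((2)*u23*α1 - u3*α2 - u2*α1))) + u1 * (((u0*u3*u23*α1) + u2 * ((-u0*u3*α1) + u23 * ((u3*α2 - u3*α1) + u0 * (α2 + α1)))) + u12 * ((u3 * ((-u23*α2 + (2)*u23*α1) + u2 * (-α2 + (-2)*α1))) + u0 * ((-u23*α2 + (-2)*u23*α1) + u2 * (-α2 + (2)*α1))) + u12^2 * ((u3*α2 + u0*α2) + α1 * ((-u23 + u3 + u2) + u0 * ((-1))))) + u1^2 * (((-u3*u23*α1) + u2 * (-u23*α2 + (2)*u3*α1 - u0*α1)) + u12 * ((u23*α2 + u2*α2) + α1 * ((u23 - u3 - u2)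 + u0 * ((1)))) + u12^2 * (-α2))) + α3^2 * (-u1 + u0) * (-u12 + u1) * (-u12 + u2) * (-u23 + u3)) = 0 := by
      have e : (α3 * (u0 - u2) - α2 * (u0 - u3)) * ((-u3 + u0) * (-u12 + u1) * (-u12 + u1) * (-u23*α1^2 + u2*α1^2) + α3 * (((-u0*u2*u3*u23*α2) + u12 * ((u2*u3*u23*α1) + u0 * ((-u2*u23*α1) + u3 * ((u23*α2 - u23*α1) + u2 * (α2 + α1)))) + u12^2 * ((-u3*u23*α1) + u0 * ((2)*u23*α1 - u3*α2 - u2*α1))) + u1 * (((u0*u3*u23*α1) + u2 * ((-u0*u3*α1) + u23 * ((u3*α2 - u3*α1) + u0 * (α2 + α1)))) + u12 * ((u3 * ((-u23*α2 + (2)*u23*α1) + u2 * (-α2 + (-2)*α1))) + u0 * ((-u23*α2 + (-2)*u23*α1) + u2 * (-α2 + (2)*α1))) + u12^2 * ((u3*α2 + u0*α2) + α1 * ((-u23 + u3 + u2) + u0 * ((-1))))) + u1^2 * (((-u3*u23*α1) + u2 * (-u23*α2 + (2)*u3*α1 - u0*α1)) + u12 * ((u23*α2 + u2*α2) + α1 *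 ((u23 - u3 - u2) + u0 * ((1)))) + u12^2 * (-α2))) + α3^2 * (-u1 + u0) * (-u12 + u1) * (-u12 + u2) * (-u23 + u3)) = 0 := by
        linear_combination ((-u3 + u0) * (-u12^2*α1^2 + (2)*u1*u12*α1^2 - u1^2*α1^2) + α3 * (((-u0*u2*u3*α2) + u12 * ((u2*u3*α1) + u0 * (u3*α2 - u3*α1 - u2*α1)) + u12^2 * (-u3*α1 + (2)*u0*α1)) + u1 * ((-u12 + u2) * (u3*α2 + u0*α2) + α1 * ((-u12^2 + (2)*u3*u12 - u2*u3) + u0 * ((-2)*u12 + u3 + u2))) + u1^2 * ((-u3*α1 - u2*α2) + u12 * (α2 + α1))) + α3^2 * (-u1 + u0) * (-u12 + u1) * (u12 - u2)) * h2 + α3 * (((-u1*u2*u12*α3) + u0 * ((u2*u12*α3 - u2*u12*α1) + u1 * ((u12*α3 - u12*α2) + u2 * (-α3 + α2 + α1)))) + u3 * (((u2*u12*α1) + u1 * ((u12*α2) + u2 * ((2)*α3 - α2 - α1))) + u0 * ((-u2*α2 - u1*α1) + u12 * ((-2)*α3 + α2 + α1))) + u3^2 * (((u2*α2 + u1*α1)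 + u12 * (-α2 - α1)) + α3 * ((u12 - u2 - u1) + u0 * ((1))))) * h1
      exact (mul_eq_zero.mp e).resolve_left hK2
    have hR1 : (((u2*u23*u31*α2) + u1 * ((-u23*u31*α1) + u2 * ((-u31*α3 + u31*α1) + u23 * (α3 - α2)))) + u12 * (((-u2*u23*α3) + u31 * ((-u23*α2 + u23*α1) + u2 * (α3 - α2 - α1))) + u1 * ((u31*α3 + u2*α2 - u2*α1) + u23 * (-α3 + α2 + α1))) + u12^2 * (((u2*α1 - u1*α2) + u31 * (-α3 + α2)) + u23 * (α3 - α1))) = 0 := by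
      have e : (α1 * (u0 - u3) - α3 * (u0 - u1)) * (((u2*u23*u31*α2) + u1 * ((-u23*u31*α1) + u2 * ((-u31*α3 + u31*α1) + u23 * (α3 - α2)))) + u12 * (((-u2*u23*α3) + u31 * ((-u23*α2 + u23*α1) + u2 * (α3 - α2 - α1))) + u1 * ((u31*α3 + u2*α2 - u2*α1) + u23 * (-α3 + α2 + α1))) + u12^2 * (((u2*α1 - u1*α2) + u31 * (-α3 + α2)) + u23 * (α3 - α1))) = 0 := by
        linear_combination (((u2*u23*α2) + u1 * (-u23*α1 - u2*α3 + u2*α1)) + u12 * ((-u23*α2 + u23*α1 + u1*α3) + u2 * (α3 - α2 - α1)) + u12^2 * (-α3 + α2)) * h3 + hR2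
      exact (mul_eq_zero.mp e).resolve_left hK3
    have tz1 : α3 * (u2 - u12) * (u23 - u123) - α1 * (u2 - u23) * (u12 - u123) = 0 := by
      have e : (α3 * (u1 - u12) - α2 * (u1 - u31)) *
          (α3 * (u2 - u12) * (u23 - u123) - α1 * (u2 - u23) * (u12 - u123)) = 0 := by
        linear_combination ((-u23*α1 + u12*α3) + u2 * (-α3 + α1)) * h4 + α3 * hR1
      exact (mul_eq_zero.mp e).resolve_left hK4
    have hKt : α1 * (u2 - u23) - α3 * (u2 - u12) ≠ 0 := by
      intro hK
      apply ha3
      refine mul3_zero (a := α3) ?_ (sub_ne_zero.mpr d5ad) (sub_ne_zero.mpr d5bd)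
      linear_combination tz1 + (u12 - u123) * hK
    have hS2 : ((-u1 + u0) * (-u12 + u2) * (u23^2*α3^2 + (-2)*u3*u23*α3^2 + u3^2*α3^2) + α1 * (((-u0*u1*u2*u12*α2) + u23 * ((u1*u2*u12*α3) + u0 * ((-u2*u12*α3) + u1 * ((-u12*α3 + u12*α2) + u2 * (α3 + α2)))) + u23^2 * ((-u1*u12*α3) + u0 * ((2)*u12*α3 - u2*α3 - u1*α2))) + u3 * (((u0*u1*u12*α3) + u2 * ((-u0*u1*α3) + u12 * ((-u1*α3 + u1*α2) + u0 * (α3 + α2)))) + u23 * ((u1 * (((2)*u12*α3 - u12*α2) + u2 * ((-2)*α3 - α2))) + u0 * (((-2)*u12*α3 - u12*α2) + u2 * ((2)*α3 - α2))) + u23^2 * ((u1*α2 + u0*α2) + α3 * ((-u12 + u2 + u1) + u0 * ((-1))))) + u3^2 * (((-u1*u12*α3) + u2 * (-u12*α2 + (2)*u1*α3 - u0*α3)) + u23 * ((u12*α2 + u2*α2) + α3 * ((u12 - u2 - u1) + u0 * ((1)))) + u23^2 * (-α2))) + α1^2 * (-u3 + u0) * (-u12 + u1) * (-u23 + u2)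 * (-u23 + u3)) = 0 := by
      have e : (α3 * (u0 - u2) - α2 * (u0 - u3))^2 * ((-u1 + u0) * (-u12 + u2) * (u23^2*α3^2 + (-2)*u3*u23*α3^2 + u3^2*α3^2) + α1 * (((-u0*u1*u2*u12*α2) + u23 * ((u1*u2*u12*α3) + u0 * ((-u2*u12*α3) + u1 * ((-u12*α3 + u12*α2) + u2 * (α3 + α2)))) + u23^2 * ((-u1*u12*α3) + u0 * ((2)*u12*α3 - u2*α3 - u1*α2))) + u3 * (((u0*u1*u12*α3) + u2 * ((-u0*u1*α3) + u12 * ((-u1*α3 + u1*α2) + u0 * (α3 + α2)))) + u23 * ((u1 * (((2)*u12*α3 - u12*α2) + u2 * ((-2)*α3 - α2))) + u0 * (((-2)*u12*α3 - u12*α2) + u2 * ((2)*α3 - α2))) + u23^2 * ((u1*α2 + u0*α2) + α3 * ((-u12 + u2 + u1) + u0 * ((-1))))) + u3^2 * (((-u1*u12*α3) + u2 * (-u12*α2 + (2)*u1*α3 - u0*α3)) + u23 * ((u12*α2 + u2*α2) + α3 * ((u12 - u2 - u1) + u0 * ((1)))) + u23^2 * (-α2))) + α1^2 * (-u3 + u0)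 * (-u12 + u1) * (-u23 + u2) * (-u23 + u3)) = 0 := by
        linear_combination ((-u3 + u0) * (-u3 + u0) * (α1) * (α2) * (((u12*u23*α1) + u3 * (-u23*α2 + u12*α2 - u12*α1)) + u1 * ((-u12*α2 + u3*α1) + u23 * (α2 - α1))) + α3 * (-u3 + u0) * (α1) * ((-u2 + u0) * (-u12 + u1) * (u23*α1 - u2*α1) + α2 * (((-u23 + u2) * (-u1*u12 - u1*u2) + u0 * (((-2)*u12*u23 - u1*u23 + (2)*u1*u12) + u2 * (u23 - u12) + u2^2 * ((1)))) + u3 * (((u12*u23 + (-2)*u2*u23 + (2)*u2*u12) + u1 * (-u23 + (-2)*u12 + (2)*u2)) + u0 * (((2)*u23 + u12 + (-2)*u2) + u1 * ((-1)))) + u3^2 * (-u12 + u1))) + α3^2 * (((u2*u3*u12*u23*α1 - u2^2*u3*u23*α1) + u1 * ((u3*u12*u23*α2 + (-2)*u3^2*u12*α2) + u2 * ((u12*u23*α1) + u3 * ((-u23*α2 - u23*α1) + u12 * (α2 - α1)) + u3^2 * ((2)*α2)) + u2^2 * (-u12*α1 - u3*α2 + (2)*u3*α1))) + u0 * (((u1*u3*u23*α1)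 + u12 * ((-u1*u23*α2 - u1*u23*α1) + u3 * ((-u23*α2 - u23*α1) + u1 * ((2)*α2 + α1)) + u3^2 * ((2)*α2))) + u2 * ((((-2)*u12*u23*α1) + u1 * (u23*α2 - u12*α2 + (2)*u12*α1)) + u3 * (((2)*u23*α1 + (-2)*u1*α1) + α2 * (u23 - u12 + (-2)*u1)) + u3^2 * ((-2)*α2)) + u2^2 * ((u3*α2 + u1*α2) + α1 * ((u23 + u12 - u3) + u1 * ((-1))))) + u0^2 * (((-u3*u23*α1) + u12 * (((-2)*u3*α2 - u1*α1) + u23 * (α2 + (2)*α1))) + u2 * ((-u23*α2 + u12*α2 + (2)*u3*α2) + α1 * ((-u23 - u12 + u3) + u1 * ((1)))) + u2^2 * (-α2))) + α3^3 * (-u1 + u0) * (-u2 + u0) * (-u12 + u2) * (u23 - u3)) * h2 + (-u3 + u0) * (-u3 + u0) * (-u3 + u2) * (-u3 + u2) * (-α2*α3^2 + α1*α2*α3) * h1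
      exact (mul_eq_zero.mp e).resolve_left (pow_ne_zero 2 hK2)
    have hS1 : (((u3*u12*u31*α3) + u2 * ((-u12*u31*α2) + u3 * ((-u31*α3 + u31*α1) + u12 * (α2 - α1)))) + u23 * (((-u3*u31*α1) + u12 * ((-u31*α3 + u31*α2) + u3 * (-α3 - α2 + α1))) + u2 * ((u12*α1 + u3*α3 - u3*α2) + u31 * (α3 + α2 - α1))) + u23^2 * (((u3*α2 - u2*α3) + u31 * (-α2 + α1)) + u12 * (α3 - α1))) = 0 := by
      have e : (α1 * (u0 - u3) - α3 * (u0 - u1)) * (((u3*u12*u31*α3) + u2 * ((-u12*u31*α2) + u3 * ((-u31*α3 + u31*α1) + u12 * (α2 - α1)))) + u23 * (((-u3*u31*α1) + u12 * ((-u31*α3 + u31*α2) + u3 * (-α3 - α2 + α1))) + u2 * ((u12*α1 + u3*α3 - u3*α2) + u31 * (α3 + α2 - α1))) + u23^2 * (((u3*α2 - u2*α3) + u31 * (-α2 + α1)) + u12 * (α3 - α1))) = 0 := by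
        linear_combination (((u3*u12*α3) + u2 * (-u12*α2 - u3*α3 + u3*α1)) + u23 * ((-u12*α3 + u12*α2 - u3*α1) + u2 * (α3 + α2 - α1)) + u23^2 * (-α2 + α1)) * h3 + hS2
      exact (mul_eq_zero.mp e).resolve_left hK3
    have tz2 : α1 * (u3 - u23) * (u31 - u123) - α2 * (u3 - u31) * (u23 - u123) = 0 := by
      have e : (α1 * (u2 - u23) - α3 * (u2 - u12)) *
          (α1 * (u3 - u23) * (u31 - u123) - α2 * (u3 - u31) * (u23 - u123)) = 0 := by
        linear_combination ((-u31*α2 + u23*α1) + u3 * (α2 - α1)) * tz1 + α1 * hS1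
      exact (mul_eq_zero.mp e).resolve_left hKt
    exact ⟨tz1, tz2⟩
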